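/- arXiv:1502.04281 — 6 statements merged into one kernel-verified Lean document; each statement's English description precedes it below -/
import Mathlib

section
/- Let v and w be vectors in ℝ^n and let 1 ≤ k ≤ n. If Ŝ ⊆ [n] with |Ŝ| = k maximizes w(S) over all subsets S of cardinality k, and S* ⊆ [n] with |S*| = k maximizes v(S) over all subsets S of cardinality k, then w(Ŝ) ≥ v(S*) − √k·‖v − w‖₂, where ‖x‖₂ denotes the Euclidean norm. -/
/-- For vectors `v, w ∈ ℝⁿ` and `1 ≤ k ≤ n`, if `Ŝ` maximizes
`w(S)` and `S*` maximizes `v(S)` over sets of cardinality `k`, then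
`w(Ŝ) ≥ v(S*) - √k · ‖v - w‖₂`. -/
theorem topk_cross_bound
    (n k : ℕ) (hk1 : 1 ≤ k) (hkn : k ≤ n)
    (v w : Fin n → ℝ)
    (Shat Sstar : Finset (Fin n)) (hShat : Shat.card = k) (hSstar : Sstar.card = k)
    (hShatMax : ∀ T : Finset (Fin n), T.card = k → ∑ i ∈ T, w i ≤ ∑ i ∈ Shat, w i)
    (hSstarMax : ∀ T : Finset (Fin n), T.card = k → ∑ i ∈ T, v i ≤ ∑ i ∈ Sstar, v i) :
    ∑ i ∈ Sstar, v i - Real.sqrt k * Real.sqrt (∑ i, (v i - w i) ^ 2)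
      ≤ ∑ i ∈ Shat, w i := by
  have h1 : ∑ i ∈ Sstar, w i ≤ ∑ i ∈ Shat, w i := hShatMax Sstar hSstar
  have hcs : (∑ i ∈ Sstar, (v i - w i)) ^ 2 ≤ (k : ℝ) * ∑ i ∈ Sstar, (v i - w i) ^ 2 := by
    have := sq_sum_le_card_mul_sum_sq (s := Sstar) (f := fun i => v i - w i)
    simpa [hSstar] using this
  have hsub : ∑ i ∈ Sstar, (v i - w i) ^ 2 ≤ ∑ i, (v i - w i) ^ 2 :=
    Finset.sum_le_sum_of_subset_of_nonneg (Finset.subset_univ _)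
      (fun i _ _ => sq_nonneg _)
  have h2 : ∑ i ∈ Sstar, (v i - w i) ≤
      Real.sqrt k * Real.sqrt (∑ i, (v i - w i) ^ 2) := by
    have hle : (∑ i ∈ Sstar, (v i - w i)) ^ 2 ≤ (k : ℝ) * ∑ i, (v i - w i) ^ 2 :=
      hcs.trans (by
        exact mul_le_mul_of_nonneg_left hsub (by positivity))
    calc ∑ i ∈ Sstar, (v i - w i) ≤ |∑ i ∈ Sstar, (v i - w i)| := le_abs_self _
      _ = Real.sqrt ((∑ i ∈ Sstar, (v i - w i)) ^ 2) := (Real.sqrt_sq_eq_abs _).symm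
      _ ≤ Real.sqrt ((k : ℝ) * ∑ i, (v i - w i) ^ 2) := Real.sqrt_le_sqrt hle
      _ = Real.sqrt k * Real.sqrt (∑ i, (v i - w i) ^ 2) := Real.sqrt_mul (by positivity) _
  have : ∑ i ∈ Sstar, v i - ∑ i ∈ Sstar, w i ≤
      Real.sqrt k * Real.sqrt (∑ i, (v i - w i) ^ 2) := by
    simpa [Finset.sum_sub_distrib] using h2
  linarith
end

section
/- Let Q be an n×n matrix with nonnegative entries whose columns each sum to 1, let p_T ∈ (0,1], and let π be a probability vector satisfying Qπ = π and π_i ≥ p_T/n for all i. Let u be the uniform distribution on [n]. Then for every integer t ≥ 0, Σ_{τ=0}^{t} ‖Q^τ u‖₂² ≤ 1/n + t·‖π‖_∞ / p_T, where ‖x‖₂ is the Euclidean norm and ‖x‖_∞ the maximum entry in absolute value. -/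
/-- For a column-stochastic nonnegative matrix `Q`, `p_T ∈ (0,1]`,
and a probability vector `π` with `Q π = π` and `π i ≥ p_T / n` for all `i`, the walk
distributions started from the uniform distribution `u` satisfy
`∑_{τ=0}^{t} ‖Q^τ u‖₂² ≤ 1/n + t ‖π‖_∞ / p_T`. -/
theorem walk_collision_sum_bound
    (n : ℕ) (Q : Matrix (Fin n) (Fin n) ℝ) (pT : ℝ)
    (hQ0 : ∀ i j, 0 ≤ Q i j) (hQcol : ∀ j, ∑ i, Q i j = 1)
    (hpT0 : 0 < pT) (hpT1 : pT ≤ 1)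
    (π : Fin n → ℝ) (hπ0 : ∀ i, 0 ≤ π i) (hπ1 : ∑ i, π i = 1)
    (hfix : Q.mulVec π = π) (hlb : ∀ i, pT / (n : ℝ) ≤ π i)
    (u : Fin n → ℝ) (hu : ∀ i, u i = 1 / (n : ℝ))
    (t : ℕ) :
    ∑ τ ∈ Finset.range (t + 1), ∑ i, (((Q ^ τ).mulVec u) i) ^ 2
      ≤ 1 / (n : ℝ) + t * (⨆ i, |π i|) / pT := by
  have hn : 0 < n := by
    by_contra h
    push_neg at h
    interval_cases n
    simp at hπ1
  have hn' : (0:ℝ) < n := by exact_mod_cast hn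
  haveI : Nonempty (Fin n) := ⟨⟨0, hn⟩⟩
  -- invariants for w τ := (Q^τ).mulVec u
  have key : ∀ τ, (∀ i, 0 ≤ ((Q ^ τ).mulVec u) i) ∧
      (∑ i, ((Q ^ τ).mulVec u) i = 1) ∧
      (∀ i, ((Q ^ τ).mulVec u) i ≤ π i / pT) := by
    intro τ
    induction τ with
    | zero =>
      simp only [pow_zero, Matrix.one_mulVec]
      refine ⟨fun i => by rw [hu]; positivity, ?_, fun i => ?_⟩
      · simp [hu, Finset.sum_const]
        field_simp
      · rw [hu, le_div_iff₀ hpT0]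
        have := hlb i
        rw [div_eq_mul_one_div] at this
        linarith [this]
    | succ τ ih =>
      obtain ⟨h0, h1, h2⟩ := ih
      have hrw : (Q ^ (τ+1)).mulVec u = Q.mulVec ((Q ^ τ).mulVec u) := by
        rw [pow_succ', Matrix.mulVec_mulVec]
      rw [hrw]
      simp only [Matrix.mulVec, dotProduct]
      refine ⟨fun i => ?_, ?_, fun i => ?_⟩
      · exact Finset.sum_nonneg fun j _ => mul_nonneg (hQ0 i j) (h0 j)
      · rw [Finset.sum_comm]
        simp_rw [← Finset.sum_mul, hQcol, one_mul]
        exact h1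
      · calc ∑ j, Q i j * ((Q ^ τ).mulVec u) j
            ≤ ∑ j, Q i j * (π j / pT) :=
              Finset.sum_le_sum fun j _ => mul_le_mul_of_nonneg_left (h2 j) (hQ0 i j)
          _ = (∑ j, Q i j * π j) / pT := by rw [Finset.sum_div]; congr 1; ext j; ring
          _ = π i / pT := by
              have h := congrFun hfix i
              simp only [Matrix.mulVec, dotProduct] at h
              rw [h]
  set M := ⨆ i, |π i| with hM
  have hMle : ∀ i, π i ≤ M := fun i =>
    le_trans (le_abs_self _) (le_ciSup (f := fun i => |π i|) (Set.Finite.bddAbove (Set.finite_range _)) i)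
  -- bound each term for τ ≥ 0
  have hterm : ∀ τ, ∑ i, (((Q ^ τ).mulVec u) i) ^ 2 ≤ M / pT := by
    intro τ
    obtain ⟨h0, h1, h2⟩ := key τ
    calc ∑ i, (((Q ^ τ).mulVec u) i) ^ 2
        ≤ ∑ i, ((Q ^ τ).mulVec u) i * (M / pT) := by
          refine Finset.sum_le_sum fun i _ => ?_
          rw [sq]
          exact mul_le_mul_of_nonneg_left
            (le_trans (h2 i) (div_le_div_of_nonneg_right (hMle i) hpT0.le)) (h0 i)
      _ = M / pT := by rw [← Finset.sum_mul, h1, one_mul]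
  have hterm0 : ∑ i, (((Q ^ 0).mulVec u) i) ^ 2 = 1 / (n:ℝ) := by
    simp only [pow_zero, Matrix.one_mulVec]
    simp [hu, Finset.sum_const]
    field_simp
  rw [Finset.sum_range_succ']
  simp only [hterm0]
  have : ∑ τ ∈ Finset.range t, ∑ i, (((Q ^ (τ+1)).mulVec u) i) ^ 2
      ≤ ∑ τ ∈ Finset.range t, M / pT :=
    Finset.sum_le_sum fun τ _ => hterm (τ+1)
  rw [Finset.sum_const, Finset.card_range, nsmul_eq_mul] at this
  rw [mul_div_assoc]
  linarith [this]
end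

section
/- Let Q be an n×n matrix with nonnegative entries whose columns each sum to 1, let p_T ∈ (0,1], and let π be a probability vector satisfying Qπ = π and π_i ≥ p_T/n for all i. Let u be the uniform distribution on [n]. Let (X_0,…,X_t) and (Y_0,…,Y_t) be two independent [n]-valued random processes such that for each τ, the random variables X_τ and Y_τ each have distribution Q^τ u. Then the probability that the two walks meet within t steps satisfies ℙ(∃ τ ∈ {0,…,t} : X_τ = Y_τ) ≤ 1/n + t·‖π‖_∞ / p_T, where ‖π‖_∞ denotes the maximal element of π. -/
open MeasureTheory ProbabilityTheory

/-- Let `Q` be a column-stochastic nonnegative matrix, `p_T ∈ (0,1]`,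
and `π` a probability vector with `Q π = π` and `π i ≥ p_T / n` for all `i`; let `u`
be the uniform distribution. If `(X_0, …, X_t)` and `(Y_0, …, Y_t)` are two
`[n]`-valued random processes, independent of one another, with `X_τ` and `Y_τ` each
distributed as `Q^τ u`, then
`ℙ(∃ τ ≤ t, X_τ = Y_τ) ≤ 1/n + t ‖π‖_∞ / p_T`. -/
theorem meeting_probability_pagerank_bound
    (n t : ℕ) (Q : Matrix (Fin n) (Fin n) ℝ) (pT : ℝ)
    (hQ0 : ∀ i j, 0 ≤ Q i j) (hQcol : ∀ j, ∑ i, Q i j = 1)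
    (hpT0 : 0 < pT) (hpT1 : pT ≤ 1)
    (π : Fin n → ℝ) (hπ0 : ∀ i, 0 ≤ π i) (hπ1 : ∑ i, π i = 1)
    (hfix : Q.mulVec π = π) (hlb : ∀ i, pT / (n : ℝ) ≤ π i)
    (u : Fin n → ℝ) (hu : ∀ i, u i = 1 / (n : ℝ))
    (Ω : Type*) [MeasurableSpace Ω] (μ : Measure Ω) [IsProbabilityMeasure μ]
    (X Y : Fin (t + 1) → Ω → Fin n)
    (hindep : IndepFun (fun ω τ => X τ ω) (fun ω τ => Y τ ω) μ)
    (hX : ∀ (τ : Fin (t + 1)) (i : Fin n),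
      μ {ω | X τ ω = i} = ENNReal.ofReal (((Q ^ (τ : ℕ)).mulVec u) i))
    (hY : ∀ (τ : Fin (t + 1)) (i : Fin n),
      μ {ω | Y τ ω = i} = ENNReal.ofReal (((Q ^ (τ : ℕ)).mulVec u) i)) :
    (μ {ω | ∃ τ, X τ ω = Y τ ω}).toReal ≤ 1 / (n : ℝ) + t * (⨆ i, π i) / pT := by
  rcases Nat.eq_zero_or_pos n with h0 | hn
  · subst h0; simp at hπ1
  have hn0 : (0:ℝ) < n := by exact_mod_cast hn
  set q : ℕ → Fin n → ℝ := fun τ => (Q ^ τ).mulVec u with hqdef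
  -- nonnegativity of powers
  have hQpow : ∀ τ i j, 0 ≤ (Q ^ τ) i j := by
    intro τ
    induction τ with
    | zero =>
      intro i j
      simp only [pow_zero, Matrix.one_apply]
      split <;> norm_num
    | succ k ih =>
      intro i j
      rw [pow_succ, Matrix.mul_apply]
      exact Finset.sum_nonneg fun l _ => mul_nonneg (ih i l) (hQ0 l j)
  have hqnonneg : ∀ τ i, 0 ≤ q τ i := by
    intro τ i
    simp only [hqdef, Matrix.mulVec, dotProduct]
    refine Finset.sum_nonneg fun j _ => mul_nonneg (hQpow τ i j) ?_
    rw [hu j]; positivity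
  -- sum preservation: column stochastic
  have hmulsum : ∀ v : Fin n → ℝ, ∑ i, (Q.mulVec v) i = ∑ i, v i := by
    intro v
    simp only [Matrix.mulVec, dotProduct]
    rw [Finset.sum_comm]
    refine Finset.sum_congr rfl fun j _ => ?_
    rw [← Finset.sum_mul, hQcol j, one_mul]
  have hqsum : ∀ τ, ∑ i, q τ i = 1 := by
    intro τ
    induction τ with
    | zero =>
      simp only [hqdef, pow_zero, Matrix.one_mulVec]
      simp only [hu, Finset.sum_const, Finset.card_univ, Fintype.card_fin, nsmul_eq_mul]
      field_simp
    | succ k ih =>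
      have : q (k+1) = Q.mulVec (q k) := by
        simp only [hqdef, Matrix.mulVec_mulVec, ← pow_succ']
      rw [this, hmulsum, ih]
  -- fixed point of powers
  have hfixpow : ∀ τ, (Q ^ τ).mulVec π = π := by
    intro τ
    induction τ with
    | zero => simp
    | succ k ih => rw [pow_succ', ← Matrix.mulVec_mulVec, ih, hfix]
  -- pointwise bound q τ i ≤ π i / pT
  have hqle : ∀ τ i, q τ i ≤ π i / pT := by
    intro τ i
    have h1 : q τ i ≤ ((Q ^ τ).mulVec fun j => π j / pT) i := by
      simp only [hqdef, Matrix.mulVec, dotProduct]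
      refine Finset.sum_le_sum fun j _ => ?_
      refine mul_le_mul_of_nonneg_left ?_ (hQpow τ i j)
      rw [hu j, div_le_div_iff₀ hn0 hpT0, one_mul]
      calc pT = pT := rfl
      _ ≤ π j * n := by
        have := hlb j
        rw [div_le_iff₀ hn0] at this
        linarith
    have h2 : ((Q ^ τ).mulVec fun j => π j / pT) i = π i / pT := by
      simp only [Matrix.mulVec, dotProduct]
      have : ∑ j, (Q ^ τ) i j * (π j / pT) = (∑ j, (Q ^ τ) i j * π j) / pT := by
        rw [Finset.sum_div]
        exact Finset.sum_congr rfl fun j _ => (mul_div_assoc _ _ _).symm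
      rw [this]
      have := congrFun (hfixpow τ) i
      simp only [Matrix.mulVec, dotProduct] at this
      rw [this]
    linarith
  -- sup bound
  have hbdd : BddAbove (Set.range π) := (Set.finite_range π).bddAbove
  have hsup : ∀ i, π i ≤ ⨆ i, π i := fun i => le_ciSup hbdd i
  have hsup0 : 0 ≤ ⨆ i, π i := le_trans (hπ0 ⟨0, hn⟩) (hsup ⟨0, hn⟩)
  set M : ℝ := (⨆ i, π i) / pT with hM
  have hM0 : 0 ≤ M := div_nonneg hsup0 hpT0.le
  -- collision probability per step, real side
  set s : ℕ → ℝ := fun τ => ∑ i, q τ i * q τ i with hs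
  have hs0 : s 0 = 1 / n := by
    have hq0 : ∀ i, q 0 i = 1 / n := by
      intro i
      simp only [hqdef, pow_zero, Matrix.one_mulVec]
      exact hu i
    simp only [hs]
    rw [Finset.sum_congr rfl fun i _ => by rw [hq0 i]]
    simp only [Finset.sum_const, Finset.card_univ, Fintype.card_fin, nsmul_eq_mul]
    field_simp
  have hsle : ∀ τ, s τ ≤ M := by
    intro τ
    have : ∀ i, q τ i * q τ i ≤ M * q τ i := by
      intro i
      refine mul_le_mul_of_nonneg_right ?_ (hqnonneg τ i)
      refine le_trans (hqle τ i) ?_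
      rw [hM]
      gcongr
      exact hsup i
    calc s τ ≤ ∑ i, M * q τ i := Finset.sum_le_sum fun i _ => this i
    _ = M * ∑ i, q τ i := by rw [Finset.mul_sum]
    _ = M := by rw [hqsum τ, mul_one]
  have hsnonneg : ∀ τ, 0 ≤ s τ :=
    fun τ => Finset.sum_nonneg fun i _ => mul_nonneg (hqnonneg τ i) (hqnonneg τ i)
  -- measure-theoretic part
  have hmeet : ∀ τ : Fin (t+1), μ {ω | X τ ω = Y τ ω} ≤ ENNReal.ofReal (s (τ : ℕ)) := by
    intro τ
    have hset : {ω | X τ ω = Y τ ω} = ⋃ i : Fin n, ({ω | X τ ω = i} ∩ {ω | Y τ ω = i}) := by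
      ext ω
      simp only [Set.mem_setOf_eq, Set.mem_iUnion, Set.mem_inter_iff]
      constructor
      · intro h; exact ⟨Y τ ω, h, rfl⟩
      · rintro ⟨i, h1, h2⟩; rw [h1, h2]
    have hind : ∀ i : Fin n, μ ({ω | X τ ω = i} ∩ {ω | Y τ ω = i})
        = μ {ω | X τ ω = i} * μ {ω | Y τ ω = i} := by
      intro i
      have hms : MeasurableSet {v : Fin (t+1) → Fin n | v τ = i} := by
        have he : {v : Fin (t+1) → Fin n | v τ = i} = (fun v => v τ) ⁻¹' {i} := rfl
        rw [he]
        exact measurable_pi_apply τ (measurableSet_singleton i)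
      have := hindep.measure_inter_preimage_eq_mul _ _ hms hms
      simpa using this
    calc μ {ω | X τ ω = Y τ ω}
        ≤ ∑ i : Fin n, μ ({ω | X τ ω = i} ∩ {ω | Y τ ω = i}) := by
          rw [hset]
          exact (measure_iUnion_le _).trans_eq (tsum_fintype _)
      _ = ∑ i : Fin n, ENNReal.ofReal (q (τ : ℕ) i * q (τ : ℕ) i) := by
          refine Finset.sum_congr rfl fun i _ => ?_
          rw [hind i, hX τ i, hY τ i, ← ENNReal.ofReal_mul (hqnonneg _ i)]
      _ = ENNReal.ofReal (s (τ : ℕ)) := by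
          rw [hs, ← ENNReal.ofReal_sum_of_nonneg]
          intro i _
          exact mul_nonneg (hqnonneg _ i) (hqnonneg _ i)
  have hmain : μ {ω | ∃ τ, X τ ω = Y τ ω} ≤ ENNReal.ofReal (1 / n + t * (⨆ i, π i) / pT) := by
    have hset : {ω | ∃ τ, X τ ω = Y τ ω} = ⋃ τ : Fin (t+1), {ω | X τ ω = Y τ ω} := by
      ext ω; simp [Set.mem_iUnion]
    calc μ {ω | ∃ τ, X τ ω = Y τ ω}
        ≤ ∑ τ : Fin (t+1), μ {ω | X τ ω = Y τ ω} := by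
          rw [hset]
          exact (measure_iUnion_le _).trans_eq (tsum_fintype _)
      _ ≤ ∑ τ : Fin (t+1), ENNReal.ofReal (s (τ : ℕ)) :=
          Finset.sum_le_sum fun τ _ => hmeet τ
      _ = ENNReal.ofReal (∑ τ : Fin (t+1), s (τ : ℕ)) := by
          rw [← ENNReal.ofReal_sum_of_nonneg]
          intro τ _; exact hsnonneg _
      _ ≤ ENNReal.ofReal (1 / n + t * (⨆ i, π i) / pT) := by
          refine ENNReal.ofReal_le_ofReal ?_
          rw [Fin.sum_univ_succ]
          simp only [Fin.val_zero, Fin.val_succ]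
          rw [hs0]
          have : ∑ τ : Fin t, s ((τ : ℕ) + 1) ≤ ∑ τ : Fin t, M :=
            Finset.sum_le_sum fun τ _ => hsle _
          simp only [Finset.sum_const, Finset.card_univ, Fintype.card_fin, nsmul_eq_mul] at this
          have hMeq : (t : ℝ) * (⨆ i, π i) / pT = t * M := by
            rw [hM, mul_div_assoc]
          rw [hMeq]
          linarith
  have hrhs : 0 ≤ 1 / (n:ℝ) + t * (⨆ i, π i) / pT := by positivity
  calc (μ {ω | ∃ τ, X τ ω = Y τ ω}).toReal
      ≤ (ENNReal.ofReal (1 / n + t * (⨆ i, π i) / pT)).toReal :=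
        ENNReal.toReal_mono ENNReal.ofReal_ne_top hmain
    _ = 1 / n + t * (⨆ i, π i) / pT := ENNReal.toReal_ofReal hrhs
end

section
/- Let G be a directed graph on n vertices in which every vertex has out-degree at least 1, with adjacency matrix A (A_{ij} = 1 if there is an edge from j to i, else 0) and transition matrix P given by P_{ij} = A_{ij}/d_out(j), where d_out(j) is the out-degree of j. Let p_T ∈ (0,1), Q = (1−p_T)P + (p_T/n)·J with J the n×n all-ones matrix, let π be the PageRank vector, i.e. the probability vector satisfying Qπ = π, and let u be the uniform distribution on [n]. Then for every integer t ≥ 0, the χ²-contrast of the t-step walk distribution with respect to π satisfies χ²(Q^t u; π) ≤ ((1−p_T)/p_T)·(1−p_T)^t. -/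
/-- Let `A` be the adjacency matrix of a directed graph on `n`
vertices where every vertex has out-degree at least `1` (`A i j = 1` iff there is an
edge from `j` to `i`), `P i j = A i j / d_out(j)` with `d_out(j) = ∑ i, A i j`,
`p_T ∈ (0,1)`, `Q = (1 - p_T) P + (p_T / n) J`, `π` the PageRank vector (`Q π = π`),
and `u` the uniform distribution. Then for every `t ≥ 0`,
`χ²(Q^t u; π) ≤ ((1 - p_T)/p_T) (1 - p_T)^t`. -/
theorem chiSq_mixing_bound
    (n : ℕ) (hn : 0 < n) (A P : Matrix (Fin n) (Fin n) ℝ)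
    (hA : ∀ i j, A i j = 0 ∨ A i j = 1)
    (hdeg : ∀ j, 1 ≤ ∑ i, A i j)
    (hP : ∀ i j, P i j = A i j / ∑ i', A i' j)
    (pT : ℝ) (hpT0 : 0 < pT) (hpT1 : pT < 1)
    (Q : Matrix (Fin n) (Fin n) ℝ)
    (hQ : Q = (1 - pT) • P + (pT / (n : ℝ)) • Matrix.of (fun _ _ => (1 : ℝ)))
    (π : Fin n → ℝ) (hπ0 : ∀ i, 0 ≤ π i) (hπ1 : ∑ i, π i = 1)
    (hfix : Q.mulVec π = π)
    (u : Fin n → ℝ) (hu : ∀ i, u i = 1 / (n : ℝ))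
    (t : ℕ) :
    ∑ i, (((Q ^ t).mulVec u) i - π i) ^ 2 / π i
      ≤ ((1 - pT) / pT) * (1 - pT) ^ t := by
  have hn' : (0:ℝ) < n := Nat.cast_pos.mpr hn
  have h1pT : (0:ℝ) < 1 - pT := by linarith
  have hd : ∀ j, (0:ℝ) < ∑ i, A i j := fun j => lt_of_lt_of_le one_pos (hdeg j)
  have hAnn : ∀ i j, 0 ≤ A i j := by
    intro i j; rcases hA i j with h | h <;> simp [h]
  have hPnn : ∀ i j, 0 ≤ P i j := by
    intro i j; rw [hP]; exact div_nonneg (hAnn i j) (hd j).le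
  have hPcol : ∀ j, ∑ i, P i j = 1 := by
    intro j
    simp only [hP]
    rw [← Finset.sum_div]
    exact div_self (hd j).ne'
  -- entries of Q
  have hQe : ∀ i j, Q i j = (1 - pT) * P i j + pT / n := by
    intro i j
    simp [hQ, Matrix.add_apply, Matrix.smul_apply, smul_eq_mul]
  -- π is bounded below
  have hfix' : ∀ i, (1 - pT) * (∑ j, P i j * π j) + pT / n = π i := by
    intro i
    have := congrFun hfix i
    rw [Matrix.mulVec, dotProduct] at this
    calc (1 - pT) * (∑ j, P i j * π j) + pT / n
        = ∑ j, ((1 - pT) * P i j + pT / n) * π j := by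
          have h : ∑ j, ((1 - pT) * P i j + pT / n) * π j
              = (1 - pT) * (∑ j, P i j * π j) + pT / n * ∑ j, π j := by
            rw [Finset.mul_sum, Finset.mul_sum, ← Finset.sum_add_distrib]
            apply Finset.sum_congr rfl; intro j _; ring
          rw [h, hπ1, mul_one]
      _ = π i := by rw [← this]; apply Finset.sum_congr rfl; intro j _; rw [hQe]
  have hπlb : ∀ i, pT / n ≤ π i := by
    intro i
    rw [← hfix' i]
    have : 0 ≤ (1 - pT) * (∑ j, P i j * π j) :=
      mul_nonneg h1pT.le (Finset.sum_nonneg fun j _ => mul_nonneg (hPnn i j) (hπ0 j))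
    linarith
  have hπpos : ∀ i, 0 < π i := fun i => lt_of_lt_of_le (div_pos hpT0 hn') (hπlb i)
  -- contraction lemma
  have contract : ∀ v : Fin n → ℝ, (∑ j, v j = 0) →
      ∑ i, ((Q.mulVec v) i) ^ 2 / π i ≤ (1 - pT) * ∑ j, (v j) ^ 2 / π j := by
    intro v hv
    have hQv : ∀ i, (Q.mulVec v) i = (1 - pT) * ∑ j, P i j * v j := by
      intro i
      rw [Matrix.mulVec, dotProduct]
      calc ∑ j, Q i j * v j = ∑ j, ((1 - pT) * (P i j * v j) + pT / n * v j) := by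
            apply Finset.sum_congr rfl; intro j _; rw [hQe]; ring
        _ = (1 - pT) * ∑ j, P i j * v j := by
            rw [Finset.sum_add_distrib, ← Finset.mul_sum, ← Finset.mul_sum, hv]
            ring
    have key : ∀ i, ((Q.mulVec v) i) ^ 2 / π i
        ≤ (1 - pT) * ∑ j, P i j * (v j ^ 2 / π j) := by
      intro i
      have hCS : (∑ j, P i j * v j) ^ 2
          ≤ (∑ j, P i j * π j) * ∑ j, P i j * (v j ^ 2 / π j) := by
        apply Finset.sum_sq_le_sum_mul_sum_of_sq_eq_mul
        · intro j _; exact mul_nonneg (hPnn i j) (hπ0 j)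
        · intro j _
          exact mul_nonneg (hPnn i j) (div_nonneg (sq_nonneg _) (hπ0 j))
        · intro j _
          field_simp [(hπpos j).ne']
      have hPπ : (1 - pT) * (∑ j, P i j * π j) ≤ π i := by
        have := hfix' i
        have : (1 - pT) * (∑ j, P i j * π j) = π i - pT / n := by linarith
        rw [this]
        have : 0 < pT / n := div_pos hpT0 hn'
        linarith
      rw [hQv i, div_le_iff₀ (hπpos i)]
      have hSnn : 0 ≤ ∑ j, P i j * (v j ^ 2 / π j) :=
        Finset.sum_nonneg fun j _ =>
          mul_nonneg (hPnn i j) (div_nonneg (sq_nonneg _) (hπ0 j))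
      calc ((1 - pT) * ∑ j, P i j * v j) ^ 2
          = (1 - pT) * ((∑ j, P i j * v j) ^ 2) * (1 - pT) := by ring
        _ ≤ (1 - pT) * ((∑ j, P i j * π j) * ∑ j, P i j * (v j ^ 2 / π j)) * (1 - pT) := by
            apply mul_le_mul_of_nonneg_right _ h1pT.le
            exact mul_le_mul_of_nonneg_left hCS h1pT.le
        _ = ((1 - pT) * (∑ j, P i j * π j)) * ((1 - pT) * ∑ j, P i j * (v j ^ 2 / π j)) := by
            ring
        _ ≤ π i * ((1 - pT) * ∑ j, P i j * (v j ^ 2 / π j)) := by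
            apply mul_le_mul_of_nonneg_right hPπ
            exact mul_nonneg h1pT.le hSnn
        _ = (1 - pT) * (∑ j, P i j * (v j ^ 2 / π j)) * π i := by ring
    calc ∑ i, ((Q.mulVec v) i) ^ 2 / π i
        ≤ ∑ i, (1 - pT) * ∑ j, P i j * (v j ^ 2 / π j) :=
          Finset.sum_le_sum fun i _ => key i
      _ = (1 - pT) * ∑ j, (v j) ^ 2 / π j := by
          rw [← Finset.mul_sum]
          congr 1
          rw [Finset.sum_comm]
          apply Finset.sum_congr rfl
          intro j _
          rw [← Finset.sum_mul, hPcol]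
          ring
  -- column sums of Q are 1, so mulVec preserves total mass
  have hQcol : ∀ j, ∑ i, Q i j = 1 := by
    intro j
    simp only [hQe]
    rw [Finset.sum_add_distrib, ← Finset.mul_sum, hPcol]
    simp
    field_simp
    ring
  have hmass : ∀ w : Fin n → ℝ, ∑ i, (Q.mulVec w) i = ∑ j, w j := by
    intro w
    simp only [Matrix.mulVec, dotProduct]
    rw [Finset.sum_comm]
    apply Finset.sum_congr rfl
    intro j _
    rw [← Finset.sum_mul, hQcol, one_mul]
  have hmass_t : ∀ s : ℕ, ∑ i, ((Q ^ s).mulVec u) i = 1 := by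
    intro s
    induction s with
    | zero => simp [Matrix.one_mulVec, hu]; field_simp
    | succ s ih =>
        rw [pow_succ', ← Matrix.mulVec_mulVec, hmass, ih]
  -- induction on t
  induction t with
  | zero =>
      simp only [pow_zero, Matrix.one_mulVec, mul_one]
      have expand : ∀ i, (u i - π i) ^ 2 / π i = (1 / n) ^ 2 / π i - 2 / n + π i := by
        intro i
        rw [hu]
        field_simp [(hπpos i).ne', hn'.ne']
        ring
      calc ∑ i, (u i - π i) ^ 2 / π i
          = (∑ i, (1 / (n:ℝ)) ^ 2 / π i) - 2 / n * n + 1 := by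
            rw [Finset.sum_congr rfl fun i _ => expand i]
            rw [Finset.sum_add_distrib, Finset.sum_sub_distrib, hπ1]
            simp [Finset.sum_const, Finset.card_fin]
            ring
        _ ≤ (∑ _i : Fin n, (1 / (n:ℝ)) ^ 2 * (n / pT)) - 2 / n * n + 1 := by
            have : ∀ i : Fin n, (1 / (n:ℝ)) ^ 2 / π i ≤ (1 / n) ^ 2 * (n / pT) := by
              intro i
              rw [div_eq_mul_inv]
              apply mul_le_mul_of_nonneg_left _ (sq_nonneg _)
              rw [inv_le_comm₀ (hπpos i) (div_pos hn' hpT0)]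
              calc (n / pT)⁻¹ = pT / n := by rw [inv_div]
                _ ≤ π i := hπlb i
            gcongr ?x - _ + _
            exact Finset.sum_le_sum fun i _ => this i
        _ = (1 - pT) / pT := by
            rw [Finset.sum_const, Finset.card_fin, nsmul_eq_mul]
            field_simp [hn'.ne', hpT0.ne']
            ring
  | succ t ih =>
      have hv : ∑ j, (((Q ^ t).mulVec u) j - π j) = 0 := by
        rw [Finset.sum_sub_distrib, hmass_t t, hπ1, sub_self]
      have step : ∑ i, (((Q ^ (t+1)).mulVec u) i - π i) ^ 2 / π i
          ≤ (1 - pT) * ∑ j, (((Q ^ t).mulVec u) j - π j) ^ 2 / π j := by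
        have hQvt : ∀ i, ((Q ^ (t+1)).mulVec u) i - π i
            = (Q.mulVec (fun j => ((Q ^ t).mulVec u) j - π j)) i := by
          intro i
          have h1 : (Q ^ (t+1)).mulVec u = Q.mulVec ((Q ^ t).mulVec u) := by
            rw [pow_succ', ← Matrix.mulVec_mulVec]
          have h2 : Q.mulVec (fun j => ((Q ^ t).mulVec u) j - π j)
              = Q.mulVec ((Q ^ t).mulVec u) - Q.mulVec π := by
            rw [← Matrix.mulVec_sub]
            rfl
          rw [h1, h2, hfix]
          simp
        rw [Finset.sum_congr rfl fun i _ => by rw [hQvt i]]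
        exact contract _ hv
      calc ∑ i, (((Q ^ (t+1)).mulVec u) i - π i) ^ 2 / π i
          ≤ (1 - pT) * ∑ j, (((Q ^ t).mulVec u) j - π j) ^ 2 / π j := step
        _ ≤ (1 - pT) * ((1 - pT) / pT * (1 - pT) ^ t) :=
            mul_le_mul_of_nonneg_left ih h1pT.le
        _ = (1 - pT) / pT * (1 - pT) ^ (t + 1) := by ring
end

section
/- Let G be a directed graph on n vertices in which every vertex has out-degree at least 1, with transition matrix P given by P_{ij} = A_{ij}/d_out(j) for adjacency matrix A. Let p_T ∈ (0,1), Q = (1−p_T)P + (p_T/n)·J with J the n×n all-ones matrix, let π be the PageRank vector (the probability vector with Qπ = π), and let u be the uniform distribution on [n]. Fix an integer t ≥ 0 and 1 ≤ k ≤ n. Then for every subset S ⊆ [n] with |S| = k that maximizes (Q^t u)(S) over all subsets of cardinality k, one has π(S) ≥ max_{T ⊆ [n], |T| = k} π(T) − √((1−p_T)^{t+1} / p_T). -/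
/-- With `P`, `Q`, `π`, `u` as in the PageRank setting (adjacency
matrix `A` with all out-degrees ≥ 1, `P i j = A i j / d_out(j)`, `p_T ∈ (0,1)`,
`Q = (1-p_T) P + (p_T/n) J`, `Q π = π`), fix `t ≥ 0` and `1 ≤ k ≤ n`. Every set `S` of
cardinality `k` maximizing `(Q^t u)(S)` over sets of cardinality `k` satisfies
`π(S) ≥ max_{|T| = k} π(T) - √((1 - p_T)^{t+1} / p_T)`. -/
theorem mixing_loss_captured_mass
    (n : ℕ) (hn : 0 < n) (A P : Matrix (Fin n) (Fin n) ℝ)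
    (hA : ∀ i j, A i j = 0 ∨ A i j = 1)
    (hdeg : ∀ j, 1 ≤ ∑ i, A i j)
    (hP : ∀ i j, P i j = A i j / ∑ i', A i' j)
    (pT : ℝ) (hpT0 : 0 < pT) (hpT1 : pT < 1)
    (Q : Matrix (Fin n) (Fin n) ℝ)
    (hQ : Q = (1 - pT) • P + (pT / (n : ℝ)) • Matrix.of (fun _ _ => (1 : ℝ)))
    (π : Fin n → ℝ) (hπ0 : ∀ i, 0 ≤ π i) (hπ1 : ∑ i, π i = 1)
    (hfix : Q.mulVec π = π)
    (u : Fin n → ℝ) (hu : ∀ i, u i = 1 / (n : ℝ))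
    (t k : ℕ) (hk1 : 1 ≤ k) (hkn : k ≤ n)
    (S : Finset (Fin n)) (hScard : S.card = k)
    (hSmax : ∀ T : Finset (Fin n), T.card = k →
      ∑ i ∈ T, ((Q ^ t).mulVec u) i ≤ ∑ i ∈ S, ((Q ^ t).mulVec u) i) :
    ∀ T : Finset (Fin n), T.card = k →
      ∑ i ∈ T, π i - Real.sqrt ((1 - pT) ^ (t + 1) / pT) ≤ ∑ i ∈ S, π i := by
  intro T hT
  have hn' : (n : ℝ) ≠ 0 := Nat.cast_ne_zero.mpr hn.ne'
  have hnpos : (0:ℝ) < n := Nat.cast_pos.mpr hn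
  have h1pT : 0 < 1 - pT := by linarith
  -- basic facts about P
  have hPnn : ∀ i j, 0 ≤ P i j := by
    intro i j
    rw [hP]
    apply div_nonneg
    · rcases hA i j with h | h <;> rw [h] <;> norm_num
    · linarith [hdeg j]
  have hPcol : ∀ j, ∑ i, P i j = 1 := by
    intro j
    have hd : (0:ℝ) < ∑ i', A i' j := by linarith [hdeg j]
    simp only [hP]
    rw [← Finset.sum_div, div_self hd.ne']
  -- columns of Q sum to 1
  have hQcol : ∀ j, ∑ i, Q i j = 1 := by
    intro j
    simp only [hQ, Matrix.add_apply, Matrix.smul_apply, Matrix.of_apply, smul_eq_mul]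
    rw [Finset.sum_add_distrib, ← Finset.mul_sum, hPcol j]
    simp only [mul_one, Finset.sum_const, Finset.card_univ, Fintype.card_fin, nsmul_eq_mul]
    field_simp
    ring
  -- ℓ¹ contraction of P
  have hPcontr : ∀ z : Fin n → ℝ, ∑ i, |P.mulVec z i| ≤ ∑ i, |z i| := by
    intro z
    calc ∑ i, |P.mulVec z i| ≤ ∑ i, ∑ j, P i j * |z j| := by
          apply Finset.sum_le_sum
          intro i _
          simp only [Matrix.mulVec, dotProduct]
          calc |∑ j, P i j * z j| ≤ ∑ j, |P i j * z j| := Finset.abs_sum_le_sum_abs _ _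
            _ = ∑ j, P i j * |z j| := by
                apply Finset.sum_congr rfl
                intro j _
                rw [abs_mul, abs_of_nonneg (hPnn i j)]
      _ = ∑ j, (∑ i, P i j) * |z j| := by
          rw [Finset.sum_comm]
          simp [Finset.sum_mul]
      _ = ∑ j, |z j| := by simp [hPcol]
  -- action of Q on zero-sum vectors
  have hQz : ∀ z : Fin n → ℝ, (∑ j, z j) = 0 → ∀ i, Q.mulVec z i = (1 - pT) * P.mulVec z i := by
    intro z hz i
    have hexp : Q.mulVec z i = (1 - pT) * (∑ j, P i j * z j) + pT / n * (∑ j, z j) := by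
      simp only [Matrix.mulVec, dotProduct, hQ, Matrix.add_apply, Matrix.smul_apply,
        Matrix.of_apply, smul_eq_mul]
      rw [Finset.mul_sum, Finset.mul_sum, ← Finset.sum_add_distrib]
      apply Finset.sum_congr rfl
      intro j _
      ring
    rw [hexp, hz]
    simp [Matrix.mulVec, dotProduct]
  -- Q preserves sums
  have hsumQ : ∀ z : Fin n → ℝ, ∑ i, Q.mulVec z i = ∑ j, z j := by
    intro z
    simp only [Matrix.mulVec, dotProduct]
    rw [Finset.sum_comm]
    apply Finset.sum_congr rfl
    intro j _
    rw [← Finset.sum_mul, hQcol j, one_mul]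
  -- z = u - π
  set z : Fin n → ℝ := fun i => u i - π i with hzdef
  have hsumu : ∑ i, u i = 1 := by
    simp only [hu, Finset.sum_const, Finset.card_univ, Fintype.card_fin, nsmul_eq_mul]
    field_simp
  have hz0 : ∑ j, z j = 0 := by
    simp only [hzdef, Finset.sum_sub_distrib, hsumu, hπ1, sub_self]
  -- key induction
  have key : ∀ m : ℕ, (∑ i, ((Q ^ m).mulVec z) i = 0) ∧
      ∑ i, |((Q ^ m).mulVec z) i| ≤ (1 - pT) ^ m * ∑ i, |z i| := by
    intro m
    induction m with
    | zero => simp [hz0]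
    | succ m ih =>
        obtain ⟨ih0, ih1⟩ := ih
        have hstep : (Q ^ (m + 1)).mulVec z = Q.mulVec ((Q ^ m).mulVec z) := by
          rw [pow_succ' Q m, ← Matrix.mulVec_mulVec]
        constructor
        · rw [hstep, hsumQ, ih0]
        · rw [hstep]
          have heq : ∀ i, Q.mulVec ((Q ^ m).mulVec z) i
              = (1 - pT) * P.mulVec ((Q ^ m).mulVec z) i := hQz _ ih0
          calc ∑ i, |Q.mulVec ((Q ^ m).mulVec z) i|
              = (1 - pT) * ∑ i, |P.mulVec ((Q ^ m).mulVec z) i| := by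
                rw [Finset.mul_sum]
                apply Finset.sum_congr rfl
                intro i _
                rw [heq i, abs_mul, abs_of_nonneg h1pT.le]
            _ ≤ (1 - pT) * ∑ i, |((Q ^ m).mulVec z) i| :=
                mul_le_mul_of_nonneg_left (hPcontr _) h1pT.le
            _ ≤ (1 - pT) * ((1 - pT) ^ m * ∑ i, |z i|) :=
                mul_le_mul_of_nonneg_left ih1 h1pT.le
            _ = (1 - pT) ^ (m + 1) * ∑ i, |z i| := by ring
  -- pointwise lower bound on π
  have hπlb : ∀ i, pT / n ≤ π i := by
    intro i
    have hfi : Q.mulVec π i = π i := congrFun hfix i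
    have hexp : Q.mulVec π i = (1 - pT) * (∑ j, P i j * π j) + pT / n * (∑ j, π j) := by
      simp only [Matrix.mulVec, dotProduct, hQ, Matrix.add_apply, Matrix.smul_apply,
        Matrix.of_apply, smul_eq_mul]
      rw [Finset.mul_sum, Finset.mul_sum, ← Finset.sum_add_distrib]
      apply Finset.sum_congr rfl
      intro j _
      ring
    have hnn : 0 ≤ ∑ j, P i j * π j :=
      Finset.sum_nonneg fun j _ => mul_nonneg (hPnn i j) (hπ0 j)
    have h := hexp.symm.trans hfi
    rw [hπ1, mul_one] at h
    linarith [mul_nonneg h1pT.le hnn]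
  -- ℓ¹ distance from u to π
  have huπ : ∑ i, |z i| ≤ 2 * (1 - pT) := by
    have hmaxb : ∀ i, max (z i) 0 ≤ (1 - pT) / n := by
      intro i
      apply max_le
      · have h1 := hπlb i
        have hzi : z i = u i - π i := rfl
        have hring : (1 - pT) / (n:ℝ) = 1 / n - pT / n := by ring
        rw [hzi, hu i]
        linarith
      · positivity
    have hpt : ∀ a : ℝ, |a| = 2 * max a 0 - a := by
      intro a
      rcases le_total a 0 with h | h
      · rw [abs_of_nonpos h, max_eq_right h]; ring
      · rw [abs_of_nonneg h, max_eq_left h]; ring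
    calc ∑ i, |z i| = ∑ i, (2 * max (z i) 0 - z i) := by
          apply Finset.sum_congr rfl
          intro i _
          exact hpt (z i)
      _ = 2 * (∑ i, max (z i) 0) - ∑ i, z i := by
          rw [Finset.sum_sub_distrib, Finset.mul_sum]
      _ = 2 * (∑ i, max (z i) 0) := by rw [hz0]; ring
      _ ≤ 2 * (∑ i : Fin n, (1 - pT) / n) := by
          have := Finset.sum_le_sum (fun i (_ : i ∈ Finset.univ) => hmaxb i)
          linarith
      _ = 2 * (1 - pT) := by
          rw [Finset.sum_const, Finset.card_univ, Fintype.card_fin, nsmul_eq_mul]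
          field_simp
  -- x = Q^t u  and  x - π = Q^t z
  set x : Fin n → ℝ := (Q ^ t).mulVec u with hxdef
  have hfixpow : ∀ m : ℕ, (Q ^ m).mulVec π = π := by
    intro m
    induction m with
    | zero => simp
    | succ m ih => rw [pow_succ' Q m, ← Matrix.mulVec_mulVec, ih, hfix]
  have hxz : ∀ i, (Q ^ t).mulVec z i = x i - π i := by
    intro i
    have hzeq : z = u - π := rfl
    rw [hzeq, Matrix.mulVec_sub, hfixpow t]
    simp [hxdef]
  have hl1 : ∑ i, |x i - π i| ≤ 2 * (1 - pT) ^ (t + 1) := by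
    have h := (key t).2
    calc ∑ i, |x i - π i| = ∑ i, |((Q ^ t).mulVec z) i| := by
          apply Finset.sum_congr rfl
          intro i _
          rw [hxz i]
      _ ≤ (1 - pT) ^ t * ∑ i, |z i| := h
      _ ≤ (1 - pT) ^ t * (2 * (1 - pT)) :=
          mul_le_mul_of_nonneg_left huπ (pow_nonneg h1pT.le t)
      _ = 2 * (1 - pT) ^ (t + 1) := by ring
  -- positive-part decomposition bound
  have hmain : (∑ i ∈ T, π i) - (∑ i ∈ S, π i) ≤ ∑ i, |x i - π i| := by
    have hTS : ∑ i ∈ T, x i ≤ ∑ i ∈ S, x i := hSmax T hT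
    have h1 : ∑ i ∈ T, (π i - x i) ≤ ∑ i : Fin n, max (π i - x i) 0 := by
      calc ∑ i ∈ T, (π i - x i) ≤ ∑ i ∈ T, max (π i - x i) 0 :=
            Finset.sum_le_sum fun i _ => le_max_left _ _
        _ ≤ ∑ i : Fin n, max (π i - x i) 0 :=
            Finset.sum_le_sum_of_subset_of_nonneg (Finset.subset_univ T)
              (fun i _ _ => le_max_right _ _)
    have h2 : ∑ i ∈ S, (x i - π i) ≤ ∑ i : Fin n, max (x i - π i) 0 := by
      calc ∑ i ∈ S, (x i - π i) ≤ ∑ i ∈ S, max (x i - π i) 0 :=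
            Finset.sum_le_sum fun i _ => le_max_left _ _
        _ ≤ ∑ i : Fin n, max (x i - π i) 0 :=
            Finset.sum_le_sum_of_subset_of_nonneg (Finset.subset_univ S)
              (fun i _ _ => le_max_right _ _)
    have h3 : ∑ i : Fin n, max (π i - x i) 0 + ∑ i : Fin n, max (x i - π i) 0
        = ∑ i, |x i - π i| := by
      rw [← Finset.sum_add_distrib]
      apply Finset.sum_congr rfl
      intro i _
      rcases le_total (x i) (π i) with h | h
      · rw [max_eq_left (by linarith), max_eq_right (by linarith),
          abs_of_nonpos (by linarith)]
        ring
      · rw [max_eq_right (by linarith), max_eq_left (by linarith),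
          abs_of_nonneg (by linarith)]
        ring
    have e1 : ∑ i ∈ T, (π i - x i) = ∑ i ∈ T, π i - ∑ i ∈ T, x i :=
      Finset.sum_sub_distrib _ _
    have e2 : ∑ i ∈ S, (x i - π i) = ∑ i ∈ S, x i - ∑ i ∈ S, π i :=
      Finset.sum_sub_distrib _ _
    linarith
  -- final sqrt inequality
  have hsq : 2 * (1 - pT) ^ (t + 1) ≤ Real.sqrt ((1 - pT) ^ (t + 1) / pT) := by
    have ha : 0 < (1 - pT) ^ (t + 1) := pow_pos h1pT _
    rw [Real.le_sqrt (by positivity) (by positivity)]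
    rw [le_div_iff₀ hpT0]
    have hb : pT * (1 - pT) ≤ 1 / 4 := by nlinarith [sq_nonneg (pT - 1/2)]
    have h4 : 4 * (pT * (1 - pT)) ≤ 1 := by linarith
    have hc : (1 - pT) ^ t ≤ 1 := pow_le_one₀ h1pT.le (by linarith)
    have hd : (0:ℝ) ≤ (1 - pT) ^ t := pow_nonneg h1pT.le t
    have hs2 : (1 - pT) ^ t * (1 - pT) ^ t ≤ (1 - pT) ^ t := by nlinarith
    have he : (1 - pT) ^ (t + 1) = (1 - pT) ^ t * (1 - pT) := pow_succ _ _
    rw [he]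
    have hsq0 : 0 ≤ (1 - pT) ^ t * (1 - pT) ^ t * (1 - pT) := by positivity
    calc (2 * ((1 - pT) ^ t * (1 - pT))) ^ 2 * pT
        = (4 * (pT * (1 - pT))) * ((1 - pT) ^ t * (1 - pT) ^ t * (1 - pT)) := by ring
      _ ≤ 1 * ((1 - pT) ^ t * (1 - pT) ^ t * (1 - pT)) :=
          mul_le_mul_of_nonneg_right h4 hsq0
      _ = ((1 - pT) ^ t * (1 - pT) ^ t) * (1 - pT) := by ring
      _ ≤ (1 - pT) ^ t * (1 - pT) := mul_le_mul_of_nonneg_right hs2 h1pT.le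
  linarith
end

section
/- Let G be a directed graph on n vertices in which every vertex has out-degree at least 1, with transition matrix P given by P_{ij} = A_{ij}/d_out(j) for adjacency matrix A. Let p_T ∈ (0,1), Q = (1−p_T)P + (p_T/n)·J with J the n×n all-ones matrix, let π be the PageRank vector (the probability vector with Qπ = π), and let u be the uniform distribution on [n]. Fix integers t ≥ 0, 1 ≤ k ≤ n, N ≥ 1, and δ ∈ (0,1). Let s_1, …, s_N be independent [n]-valued random variables each with distribution Q^t u (the positions of N fully synchronized FrogWild walkers after t steps), and let π̂_N(i) = |{l : s_l = i}|/N be the empirical distribution. Then with probability at least 1 − δ, every subset Ŝ ⊆ [n] with |Ŝ| = k maximizing π̂_N(S) over subsets of cardinality k satisfies π(Ŝ) ≥ max_{T ⊆ [n], |T| = k} π(T) − 2·√((1−p_T)^{t+1}/p_T) − 2·√(k/(δN)). -/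
open MeasureTheory ProbabilityTheory

open Finset
open Finset

lemma fw_exp_prod {N n : ℕ} (q : Fin n → ℝ) (h : Fin N → Fin n → ℝ) :
    ∑ v : Fin N → Fin n, (∏ l, q (v l)) * ∏ l, h l (v l) = ∏ l, ∑ a, q a * h l a := by
  rw [Fintype.prod_sum (f := fun l a => q a * h l a)]
  exact Finset.sum_congr rfl fun v _ => (Finset.prod_mul_distrib).symm

lemma fw_exp_single {N n : ℕ} (q : Fin n → ℝ) (hq1 : ∑ a, q a = 1)
    (l₀ : Fin N) (f : Fin n → ℝ) :
    ∑ v : Fin N → Fin n, (∏ l, q (v l)) * f (v l₀) = ∑ a, q a * f a := by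
  classical
  have h := fw_exp_prod q (fun l a => if l = l₀ then f a else 1)
  have hL : ∀ v : Fin N → Fin n, (∏ l, (if l = l₀ then f (v l) else 1)) = f (v l₀) := by
    intro v
    rw [Finset.prod_eq_single l₀ (fun b _ hb => if_neg hb) (fun h => absurd (mem_univ l₀) h)]
    simp
  have hR : (∏ l, ∑ a, q a * (if l = l₀ then f a else 1)) = ∑ a, q a * f a := by
    rw [Finset.prod_eq_single l₀ (fun b _ hb => by simp [if_neg hb, hq1])
      (fun h => absurd (mem_univ l₀) h)]
    simp
  simp only [hL, hR] at h
  exact h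

lemma fw_exp_pair {N n : ℕ} (q : Fin n → ℝ) (hq1 : ∑ a, q a = 1)
    {l₀ l₁ : Fin N} (hne : l₀ ≠ l₁) (f g : Fin n → ℝ) :
    ∑ v : Fin N → Fin n, (∏ l, q (v l)) * (f (v l₀) * g (v l₁))
      = (∑ a, q a * f a) * (∑ a, q a * g a) := by
  classical
  have key : ∀ (F : Fin N → ℝ), (∀ l, l ≠ l₀ → l ≠ l₁ → F l = 1) →
      ∏ l, F l = F l₀ * F l₁ := by
    intro F hF
    rw [← Finset.mul_prod_erase Finset.univ F (Finset.mem_univ l₀),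
      ← Finset.mul_prod_erase _ F (Finset.mem_erase.mpr ⟨Ne.symm hne, Finset.mem_univ l₁⟩),
      Finset.prod_eq_one, mul_one]
    intro x hx
    simp only [Finset.mem_erase] at hx
    exact hF x hx.2.1 hx.1
  have h := fw_exp_prod q (fun l a => if l = l₀ then f a else if l = l₁ then g a else 1)
  have hL : ∀ v : Fin N → Fin n,
      (∏ l, (if l = l₀ then f (v l) else if l = l₁ then g (v l) else 1))
        = f (v l₀) * g (v l₁) := by
    intro v
    rw [key _ (fun l h0 h1 => by simp [if_neg h0, if_neg h1])]
    simp [if_neg (Ne.symm hne)]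
  have hR : (∏ l, ∑ a, q a * (if l = l₀ then f a else if l = l₁ then g a else 1))
      = (∑ a, q a * f a) * (∑ a, q a * g a) := by
    rw [key _ (fun l h0 h1 => by simp [if_neg h0, if_neg h1, hq1])]
    simp [if_neg (Ne.symm hne)]
  simp only [hL, hR] at h
  exact h

lemma fw_var_bound {N n : ℕ} (hN : 0 < N) (q : Fin n → ℝ)
    (hq0 : ∀ i, 0 ≤ q i) (hq1 : ∑ a, q a = 1) :
    ∑ v : Fin N → Fin n, (∏ l, q (v l)) *
      (∑ i, (((univ.filter (fun l => v l = i)).card : ℝ) / N - q i) ^ 2) ≤ 1 / N := by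
  classical
  have hN0 : (N : ℝ) ≠ 0 := Nat.cast_ne_zero.mpr hN.ne'
  -- per-coordinate centered sum
  set g : Fin n → Fin n → ℝ := fun i a => (if a = i then 1 else 0) - q i with hg
  have hcnt : ∀ (v : Fin N → Fin n) (i : Fin n),
      ((univ.filter (fun l => v l = i)).card : ℝ) / N - q i = (∑ l, g i (v l)) / N := by
    intro v i
    have h1 : (∑ l, g i (v l)) = ((univ.filter (fun l => v l = i)).card : ℝ) - N * q i := by
      simp only [hg, Finset.sum_sub_distrib, Finset.sum_boole, Finset.sum_const,
        Finset.card_univ, Fintype.card_fin, nsmul_eq_mul]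
    rw [h1]
    field_simp
  -- expectation of square for a single coordinate
  have hEi : ∀ i : Fin n,
      ∑ v : Fin N → Fin n, (∏ l, q (v l)) * (∑ l, g i (v l)) ^ 2 ≤ N * q i := by
    intro i
    have hg1 : ∑ a, q a * g i a = 0 := by
      simp only [hg, mul_sub, Finset.sum_sub_distrib, mul_ite, mul_one, mul_zero,
        Finset.sum_ite_eq' univ i q, Finset.mem_univ, if_true, ← Finset.sum_mul, hq1]
      ring
    have hg2 : ∑ a, q a * (g i a * g i a) = q i - q i * q i := by
      have hpt : ∀ a, q a * (g i a * g i a)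
          = (if a = i then q a else 0) * (1 - 2 * q i) + q i ^ 2 * q a := by
        intro a
        by_cases h : a = i
        · subst h; simp [hg]; ring
        · simp [hg, h]; ring
      rw [Finset.sum_congr rfl fun a _ => hpt a]
      simp only [Finset.sum_add_distrib, ← Finset.sum_mul, ← Finset.mul_sum,
        Finset.sum_ite_eq' univ i q, Finset.mem_univ, if_true, hq1]
      ring
    have expand : ∀ v : Fin N → Fin n, (∏ l, q (v l)) * (∑ l, g i (v l)) ^ 2
        = ∑ l, ∑ l', (∏ m, q (v m)) * (g i (v l) * g i (v l')) := by
      intro v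
      rw [sq, Finset.sum_mul_sum, Finset.mul_sum]
      exact Finset.sum_congr rfl fun l _ => by rw [Finset.mul_sum]
    calc ∑ v : Fin N → Fin n, (∏ l, q (v l)) * (∑ l, g i (v l)) ^ 2
        = ∑ l : Fin N, ∑ l' : Fin N, ∑ v : Fin N → Fin n,
            (∏ m, q (v m)) * (g i (v l) * g i (v l')) := by
          rw [Finset.sum_congr rfl fun v _ => expand v, Finset.sum_comm]
          exact Finset.sum_congr rfl fun l _ => Finset.sum_comm
      _ = ∑ l : Fin N, ∑ l' : Fin N, (if l = l' then q i - q i * q i else 0) := by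
          refine Finset.sum_congr rfl fun l _ => Finset.sum_congr rfl fun l' _ => ?_
          by_cases h : l = l'
          · subst h
            rw [if_pos rfl, ← hg2]
            exact fw_exp_single q hq1 l (fun a => g i a * g i a)
          · rw [if_neg h, fw_exp_pair q hq1 h (g i) (g i), hg1, mul_zero]
      _ = N * (q i - q i * q i) := by
          simp [Finset.sum_ite_eq univ, Finset.card_univ]
          ring
      _ ≤ N * q i := by
          have hNr : (0:ℝ) < N := by exact_mod_cast hN
          nlinarith [mul_nonneg (hq0 i) (hq0 i)]
  have step1 : ∀ v : Fin N → Fin n, (∏ l, q (v l)) *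
      (∑ i, (((univ.filter (fun l => v l = i)).card : ℝ) / N - q i) ^ 2)
      = ∑ i, ((∏ l, q (v l)) * (∑ l, g i (v l)) ^ 2) / (N : ℝ) ^ 2 := by
    intro v
    rw [Finset.mul_sum]
    refine Finset.sum_congr rfl fun i _ => ?_
    rw [hcnt v i, div_pow, mul_div_assoc]
  calc ∑ v : Fin N → Fin n, (∏ l, q (v l)) *
        (∑ i, (((univ.filter (fun l => v l = i)).card : ℝ) / N - q i) ^ 2)
      = ∑ i : Fin n, (∑ v : Fin N → Fin n, (∏ l, q (v l)) * (∑ l, g i (v l)) ^ 2) / (N:ℝ) ^ 2 := by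
        rw [Finset.sum_congr rfl fun v _ => step1 v, Finset.sum_comm]
        exact Finset.sum_congr rfl fun i _ => (Finset.sum_div _ _ _).symm
    _ ≤ ∑ i : Fin n, ((N : ℝ) * q i) / (N : ℝ) ^ 2 := by
        refine Finset.sum_le_sum fun i _ => ?_
        have hNr : (0:ℝ) ≤ (N:ℝ) ^ 2 := by positivity
        exact div_le_div_of_nonneg_right (hEi i) hNr
    _ = 1 / N := by
        rw [← Finset.sum_div, ← Finset.mul_sum, hq1, mul_one]
        field_simp


lemma fw_mixing (n : ℕ) (hn : 0 < n) (P : Matrix (Fin n) (Fin n) ℝ)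
    (hP0 : ∀ i j, 0 ≤ P i j) (hPcol : ∀ j, ∑ i, P i j = 1)
    (pT : ℝ) (hpT0 : 0 < pT) (hpT1 : pT < 1)
    (Q : Matrix (Fin n) (Fin n) ℝ)
    (hQ : Q = (1 - pT) • P + (pT / (n : ℝ)) • Matrix.of (fun _ _ => (1 : ℝ)))
    (π : Fin n → ℝ) (hπ0 : ∀ i, 0 ≤ π i) (hπ1 : ∑ i, π i = 1)
    (hfix : Q.mulVec π = π)
    (u : Fin n → ℝ) (hu : ∀ i, u i = 1 / (n : ℝ)) :
    (∀ m : ℕ, (∀ i, 0 ≤ ((Q ^ m).mulVec u) i) ∧ (∑ i, ((Q ^ m).mulVec u) i = 1)) ∧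
    ∀ (m : ℕ) (S : Finset (Fin n)),
      |∑ i ∈ S, (((Q ^ m).mulVec u) i - π i)| ≤ (1 - pT) ^ (m + 1) := by
  classical
  have hn0 : (n : ℝ) ≠ 0 := Nat.cast_ne_zero.mpr hn.ne'
  have hnpos : (0:ℝ) < n := Nat.cast_pos.mpr hn
  have h1pT : (0:ℝ) ≤ 1 - pT := by linarith
  -- Q applied to a vector
  have hQapp : ∀ (x : Fin n → ℝ) (i : Fin n),
      Q.mulVec x i = (1 - pT) * P.mulVec x i + (pT / n) * ∑ j, x j := by
    intro x i
    have hJ : (Matrix.of (fun _ _ => (1:ℝ))).mulVec x i = ∑ j, x j := by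
      simp [Matrix.mulVec, dotProduct]
    rw [hQ, Matrix.add_mulVec, Matrix.smul_mulVec, Matrix.smul_mulVec]
    simp only [Pi.add_apply, Pi.smul_apply, smul_eq_mul, hJ]
  -- sum over S of P.mulVec x
  have hPsum : ∀ (x : Fin n → ℝ) (S : Finset (Fin n)),
      ∑ i ∈ S, P.mulVec x i = ∑ j, (∑ i ∈ S, P i j) * x j := by
    intro x S
    simp only [Matrix.mulVec, dotProduct]
    rw [Finset.sum_comm]
    exact Finset.sum_congr rfl fun j _ => (Finset.sum_mul _ _ _).symm
  -- P preserves probability vectors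
  have hPprob : ∀ x : Fin n → ℝ, (∀ i, 0 ≤ x i) → (∑ i, x i = 1) →
      (∀ i, 0 ≤ P.mulVec x i) ∧ (∑ i, P.mulVec x i = 1) := by
    intro x hx0 hx1
    constructor
    · intro i
      simp only [Matrix.mulVec, dotProduct]
      exact Finset.sum_nonneg fun j _ => mul_nonneg (hP0 i j) (hx0 j)
    · rw [hPsum x univ]
      simp only [hPcol, one_mul]
      exact hx1
  have hu0 : ∀ i, 0 ≤ u i := fun i => by rw [hu]; positivity
  have hu1 : ∑ i, u i = 1 := by
    simp only [hu, Finset.sum_const, Finset.card_univ, Fintype.card_fin, nsmul_eq_mul]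
    field_simp
  -- Q preserves probability vectors
  have hQprob : ∀ x : Fin n → ℝ, (∀ i, 0 ≤ x i) → (∑ i, x i = 1) →
      (∀ i, 0 ≤ Q.mulVec x i) ∧ (∑ i, Q.mulVec x i = 1) := by
    intro x hx0 hx1
    have h := hPprob x hx0 hx1
    constructor
    · intro i
      rw [hQapp, hx1, mul_one]
      have := h.1 i
      have : 0 ≤ (1 - pT) * P.mulVec x i := mul_nonneg h1pT (h.1 i)
      have hd : 0 < pT / n := by positivity
      linarith
    · rw [Finset.sum_congr rfl fun i _ => hQapp x i]
      rw [Finset.sum_add_distrib, ← Finset.mul_sum, h.2, hx1]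
      simp only [Finset.sum_const, Finset.card_univ, Fintype.card_fin, nsmul_eq_mul]
      field_simp
      ring
  -- iterates are probability vectors
  have hqm : ∀ m : ℕ, (∀ i, 0 ≤ ((Q ^ m).mulVec u) i) ∧ (∑ i, ((Q ^ m).mulVec u) i = 1) := by
    intro m
    induction m with
    | zero => simpa [Matrix.one_mulVec] using ⟨hu0, hu1⟩
    | succ m ih =>
      rw [pow_succ', ← Matrix.mulVec_mulVec]
      exact hQprob _ ih.1 ih.2
  -- fixed point equation for π
  have hπeq : ∀ i, π i = (1 - pT) * P.mulVec π i + pT * u i := by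
    intro i
    conv_lhs => rw [← hfix]
    rw [hQapp, hπ1, hu]
    ring
  -- contraction property of P on mean-zero vectors
  have hcontr : ∀ (z : Fin n → ℝ) (c : ℝ), 0 ≤ c → (∑ j, z j = 0) →
      (∀ S : Finset (Fin n), |∑ j ∈ S, z j| ≤ c) →
      ∀ S : Finset (Fin n), |∑ i ∈ S, P.mulVec z i| ≤ c := by
    intro z c hc hz hb S
    rw [hPsum z S]
    set α : Fin n → ℝ := fun j => ∑ i ∈ S, P i j with hα
    have hα0 : ∀ j, 0 ≤ α j := fun j => Finset.sum_nonneg fun i _ => hP0 i j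
    have hα1 : ∀ j, α j ≤ 1 := by
      intro j
      calc α j ≤ ∑ i, P i j :=
            Finset.sum_le_sum_of_subset_of_nonneg (Finset.subset_univ S)
              (fun i _ _ => hP0 i j)
        _ = 1 := hPcol j
    set Sp : Finset (Fin n) := univ.filter (fun j => 0 ≤ z j) with hSp
    have hsplit : ∑ j ∈ Sp, z j + ∑ j ∈ univ.filter (fun j => ¬ 0 ≤ z j), z j = 0 := by
      rw [Finset.sum_filter_add_sum_filter_not univ _ z]; exact hz
    have hsplitα : ∑ j, α j * z j
        = ∑ j ∈ Sp, α j * z j + ∑ j ∈ univ.filter (fun j => ¬ 0 ≤ z j), α j * z j :=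
      (Finset.sum_filter_add_sum_filter_not univ _ _).symm
    have h1 : ∑ j ∈ Sp, α j * z j ≤ ∑ j ∈ Sp, z j := by
      refine Finset.sum_le_sum fun j hj => ?_
      have hzj : 0 ≤ z j := (Finset.mem_filter.mp hj).2
      nlinarith [hα1 j]
    have h2 : ∑ j ∈ univ.filter (fun j => ¬ 0 ≤ z j), α j * z j ≤ 0 := by
      refine Finset.sum_nonpos fun j hj => ?_
      have hzj : z j < 0 := lt_of_not_ge (Finset.mem_filter.mp hj).2
      exact mul_nonpos_of_nonneg_of_nonpos (hα0 j) hzj.le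
    have h3 : ∑ j ∈ Sp, z j ≤ c := le_trans (le_abs_self _) (hb Sp)
    have h4 : 0 ≤ ∑ j ∈ Sp, α j * z j := by
      refine Finset.sum_nonneg fun j hj => ?_
      exact mul_nonneg (hα0 j) (Finset.mem_filter.mp hj).2
    have h5 : ∑ j ∈ univ.filter (fun j => ¬ 0 ≤ z j), z j
        ≤ ∑ j ∈ univ.filter (fun j => ¬ 0 ≤ z j), α j * z j := by
      refine Finset.sum_le_sum fun j hj => ?_
      have hzj : z j < 0 := lt_of_not_ge (Finset.mem_filter.mp hj).2
      nlinarith [hα1 j, hα0 j]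
    have h6 : -c ≤ ∑ j ∈ Sp, z j := neg_le_of_abs_le (hb Sp)
    rw [abs_le]
    constructor
    · rw [hsplitα]; linarith
    · rw [hsplitα]; linarith
  refine ⟨hqm, ?_⟩
  -- main induction
  intro m
  induction m with
  | zero =>
    intro S
    have hPπ := hPprob π hπ0 hπ1
    have hpt : ∀ i, ((Q ^ 0).mulVec u) i - π i = (1 - pT) * (u i - P.mulVec π i) := by
      intro i
      rw [pow_zero, Matrix.one_mulVec]
      have := hπeq i
      ring_nf
      linarith [hπeq i]
    rw [Finset.sum_congr rfl fun i _ => hpt i, ← Finset.mul_sum, abs_mul,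
      abs_of_nonneg h1pT, pow_one]
    have hbnd : |∑ i ∈ S, (u i - P.mulVec π i)| ≤ 1 := by
      rw [Finset.sum_sub_distrib, abs_le]
      have hu_le : ∑ i ∈ S, u i ≤ 1 := by
        rw [← hu1]
        exact Finset.sum_le_sum_of_subset_of_nonneg (Finset.subset_univ S)
          (fun i _ _ => hu0 i)
      have hu_nn : 0 ≤ ∑ i ∈ S, u i := Finset.sum_nonneg fun i _ => hu0 i
      have hp_le : ∑ i ∈ S, P.mulVec π i ≤ 1 := by
        rw [← hPπ.2]
        exact Finset.sum_le_sum_of_subset_of_nonneg (Finset.subset_univ S)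
          (fun i _ _ => hPπ.1 i)
      have hp_nn : 0 ≤ ∑ i ∈ S, P.mulVec π i := Finset.sum_nonneg fun i _ => hPπ.1 i
      constructor <;> linarith
    nlinarith [abs_nonneg (∑ i ∈ S, (u i - P.mulVec π i))]
  | succ m ih =>
    intro S
    set x : Fin n → ℝ := (Q ^ m).mulVec u with hx
    set z : Fin n → ℝ := fun i => x i - π i with hzdef
    have hz0 : ∑ j, z j = 0 := by
      simp only [hzdef, Finset.sum_sub_distrib, (hqm m).2, hπ1, sub_self]
      rw [hx, (hqm m).2, sub_self]
    have hPz : ∀ i, P.mulVec z i = P.mulVec x i - P.mulVec π i := by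
      intro i
      simp only [Matrix.mulVec, dotProduct, hzdef, mul_sub, Finset.sum_sub_distrib]
    have hpt : ∀ i, ((Q ^ (m+1)).mulVec u) i - π i = (1 - pT) * P.mulVec z i := by
      intro i
      rw [pow_succ', ← Matrix.mulVec_mulVec, ← hx]
      conv_lhs => rw [← hfix]
      rw [hQapp x i, hQapp π i, hπ1, (hqm m).2, hPz]
      ring
    have hcb := hcontr z ((1 - pT) ^ (m + 1)) (pow_nonneg h1pT _) hz0 ih S
    rw [Finset.sum_congr rfl fun i _ => hpt i, ← Finset.mul_sum, abs_mul,
      abs_of_nonneg h1pT, pow_succ]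
    calc (1 - pT) * |∑ i ∈ S, P.mulVec z i| ≤ (1 - pT) * (1 - pT) ^ (m + 1) :=
          mul_le_mul_of_nonneg_left hcb h1pT
      _ = (1 - pT) ^ (m + 1) * (1 - pT) := by ring

/-- (FrogWild captured-mass guarantee, `p_s = 1`.) With the PageRank
setting (adjacency matrix `A` with all out-degrees ≥ 1, `P i j = A i j / d_out(j)`,
`p_T ∈ (0,1)`, `Q = (1-p_T) P + (p_T/n) J`, `Q π = π`, `u` uniform), fix `t ≥ 0`,
`1 ≤ k ≤ n`, `N ≥ 1`, `δ ∈ (0,1)`. Let `s_1, …, s_N` be i.i.d. with distribution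
`Q^t u`, and `π̂_N(i) = |{l : s_l = i}| / N`. Then with probability at least `1 - δ`,
every `Ŝ` of cardinality `k` maximizing `π̂_N(S)` over sets of cardinality `k`
satisfies `π(Ŝ) ≥ max_{|T| = k} π(T) - 2 √((1-p_T)^{t+1}/p_T) - 2 √(k/(δ N))`. -/
theorem frogwild_captured_mass
    (n : ℕ) (hn : 0 < n) (A P : Matrix (Fin n) (Fin n) ℝ)
    (hA : ∀ i j, A i j = 0 ∨ A i j = 1)
    (hdeg : ∀ j, 1 ≤ ∑ i, A i j)
    (hP : ∀ i j, P i j = A i j / ∑ i', A i' j)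
    (pT : ℝ) (hpT0 : 0 < pT) (hpT1 : pT < 1)
    (Q : Matrix (Fin n) (Fin n) ℝ)
    (hQ : Q = (1 - pT) • P + (pT / (n : ℝ)) • Matrix.of (fun _ _ => (1 : ℝ)))
    (π : Fin n → ℝ) (hπ0 : ∀ i, 0 ≤ π i) (hπ1 : ∑ i, π i = 1)
    (hfix : Q.mulVec π = π)
    (u : Fin n → ℝ) (hu : ∀ i, u i = 1 / (n : ℝ))
    (t k N : ℕ) (hk1 : 1 ≤ k) (hkn : k ≤ n) (hN : 1 ≤ N)
    (δ : ℝ) (hδ0 : 0 < δ) (hδ1 : δ < 1)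
    (Ω : Type*) [MeasurableSpace Ω] (μ : Measure Ω) [IsProbabilityMeasure μ]
    (s : Fin N → Ω → Fin n)
    (hindep : iIndepFun s μ)
    (hdist : ∀ l i, μ {ω | s l ω = i} = ENNReal.ofReal (((Q ^ t).mulVec u) i)) :
    ENNReal.ofReal (1 - δ) ≤
      μ {ω | ∀ Shat : Finset (Fin n), Shat.card = k →
        (∀ S : Finset (Fin n), S.card = k →
          ∑ i ∈ S, (((Finset.univ.filter (fun l => s l ω = i)).card : ℝ) / N)
            ≤ ∑ i ∈ Shat, (((Finset.univ.filter (fun l => s l ω = i)).card : ℝ) / N)) →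
        ∀ T : Finset (Fin n), T.card = k →
          ∑ i ∈ T, π i - 2 * Real.sqrt ((1 - pT) ^ (t + 1) / pT)
              - 2 * Real.sqrt (k / (δ * N))
            ≤ ∑ i ∈ Shat, π i} := by
  classical
  -- matrix basics
  have hA0 : ∀ i j, 0 ≤ A i j := by
    intro i j; rcases hA i j with h | h <;> rw [h] <;> norm_num
  have hDpos : ∀ j, (0:ℝ) < ∑ i', A i' j := fun j => lt_of_lt_of_le one_pos (hdeg j)
  have hP0 : ∀ i j, 0 ≤ P i j := by
    intro i j; rw [hP]; exact div_nonneg (hA0 i j) (hDpos j).le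
  have hPcol : ∀ j, ∑ i, P i j = 1 := by
    intro j
    rw [Finset.sum_congr rfl fun i _ => hP i j, ← Finset.sum_div, div_self (hDpos j).ne']
  obtain ⟨hqm, hmix⟩ := fw_mixing n hn P hP0 hPcol pT hpT0 hpT1 Q hQ π hπ0 hπ1 hfix u hu
  set qv : Fin n → ℝ := (Q ^ t).mulVec u with hqv
  have hq0 : ∀ i, 0 ≤ qv i := (hqm t).1
  have hq1 : ∑ i, qv i = 1 := (hqm t).2
  have hqπ : ∀ S : Finset (Fin n), |∑ i ∈ S, qv i - ∑ i ∈ S, π i| ≤ (1 - pT) ^ (t + 1) := by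
    intro S
    rw [← Finset.sum_sub_distrib]
    exact hmix t S
  have hNpos : 0 < N := hN
  have hNr : (0:ℝ) < N := by exact_mod_cast hNpos
  have hδN : (0:ℝ) < δ * N := mul_pos hδ0 hNr
  have h1pT : (0:ℝ) ≤ 1 - pT := by linarith
  set ε₁ : ℝ := Real.sqrt ((1 - pT) ^ (t + 1) / pT) with hε₁def
  set ε₂ : ℝ := Real.sqrt ((k:ℝ) / (δ * N)) with hε₂def
  have hε₁ : (1 - pT) ^ (t + 1) ≤ ε₁ := by
    have hx0 : (0:ℝ) ≤ (1 - pT) ^ (t + 1) := pow_nonneg h1pT _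
    have hx1 : (1 - pT) ^ (t + 1) ≤ 1 := pow_le_one₀ h1pT (by linarith)
    have h2 : ((1 - pT) ^ (t + 1)) ^ 2 ≤ (1 - pT) ^ (t + 1) / pT := by
      rw [le_div_iff₀ hpT0]
      nlinarith
    calc (1 - pT) ^ (t + 1) = Real.sqrt (((1 - pT) ^ (t + 1)) ^ 2) := (Real.sqrt_sq hx0).symm
      _ ≤ ε₁ := Real.sqrt_le_sqrt h2
  -- empirical quantities
  set Fv : (Fin N → Fin n) → ℝ :=
    fun v => ∑ i, (((univ.filter (fun l => v l = i)).card : ℝ) / N - qv i) ^ 2 with hFvdef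
  set W : (Fin N → Fin n) → ℝ := fun v => ∏ l, qv (v l) with hWdef
  have hW0 : ∀ v, 0 ≤ W v := fun v => Finset.prod_nonneg fun l _ => hq0 (v l)
  have hF0 : ∀ v, 0 ≤ Fv v := fun v => Finset.sum_nonneg fun i _ => sq_nonneg _
  have hEF : ∑ v : Fin N → Fin n, W v * Fv v ≤ 1 / N := fw_var_bound hNpos qv hq0 hq1
  -- deterministic part
  have hdet : ∀ v : Fin N → Fin n, Fv v ≤ 1 / (δ * N) →
      ∀ Shat : Finset (Fin n), Shat.card = k →
      (∀ S : Finset (Fin n), S.card = k →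
        ∑ i ∈ S, (((univ.filter (fun l => v l = i)).card : ℝ) / N)
          ≤ ∑ i ∈ Shat, (((univ.filter (fun l => v l = i)).card : ℝ) / N)) →
      ∀ T : Finset (Fin n), T.card = k →
        ∑ i ∈ T, π i - 2 * ε₁ - 2 * ε₂ ≤ ∑ i ∈ Shat, π i := by
    intro v hFle Shat hScard hmax T hT
    have hdev : ∀ S : Finset (Fin n), S.card = k →
        |∑ i ∈ S, (((univ.filter (fun l => v l = i)).card : ℝ) / N) - ∑ i ∈ S, qv i| ≤ ε₂ := by
      intro S hS
      rw [← Finset.sum_sub_distrib]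
      have h1 := sq_sum_le_card_mul_sum_sq (s := S)
        (f := fun i => ((univ.filter (fun l => v l = i)).card : ℝ) / N - qv i)
      have h2 : ∑ i ∈ S, (((univ.filter (fun l => v l = i)).card : ℝ) / N - qv i) ^ 2 ≤ Fv v :=
        Finset.sum_le_sum_of_subset_of_nonneg (Finset.subset_univ S) fun i _ _ => sq_nonneg _
      have hkr : (0:ℝ) ≤ (k:ℝ) := Nat.cast_nonneg k
      have h3 : (∑ i ∈ S, (((univ.filter (fun l => v l = i)).card : ℝ) / N - qv i)) ^ 2
          ≤ (k:ℝ) / (δ * N) := by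
        rw [hS] at h1
        calc (∑ i ∈ S, (((univ.filter (fun l => v l = i)).card : ℝ) / N - qv i)) ^ 2
            ≤ (k:ℝ) * ∑ i ∈ S, (((univ.filter (fun l => v l = i)).card : ℝ) / N - qv i) ^ 2 := h1
          _ ≤ (k:ℝ) * Fv v := mul_le_mul_of_nonneg_left h2 hkr
          _ ≤ (k:ℝ) * (1 / (δ * N)) := mul_le_mul_of_nonneg_left hFle hkr
          _ = (k:ℝ) / (δ * N) := by ring
      calc |∑ i ∈ S, (((univ.filter (fun l => v l = i)).card : ℝ) / N - qv i)|
          = Real.sqrt ((∑ i ∈ S, (((univ.filter (fun l => v l = i)).card : ℝ) / N - qv i)) ^ 2) :=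
            (Real.sqrt_sq_eq_abs _).symm
        _ ≤ ε₂ := Real.sqrt_le_sqrt h3
    have hd1 := abs_le.mp (hdev T hT)
    have hd2 := abs_le.mp (hdev Shat hScard)
    have hq1' := abs_le.mp (hqπ T)
    have hq2' := abs_le.mp (hqπ Shat)
    have hm := hmax T hT
    linarith [hε₁]
  -- bad set and Markov bound
  set bad : Finset (Fin N → Fin n) := univ.filter (fun v => 1 / (δ * N) < Fv v) with hbaddef
  have hbadsum : ∑ v ∈ bad, W v ≤ δ := by
    have step1 : ∑ v ∈ bad, W v ≤ ∑ v ∈ bad, W v * ((δ * N) * Fv v) := by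
      refine Finset.sum_le_sum fun v hv => ?_
      have hlt : 1 / (δ * N) < Fv v := (Finset.mem_filter.mp hv).2
      have h1 : 1 < (δ * N) * Fv v := by
        rw [div_lt_iff₀ hδN] at hlt
        linarith [hlt]
      nlinarith [hW0 v]
    have step2 : ∑ v ∈ bad, W v * ((δ * N) * Fv v)
        ≤ ∑ v : Fin N → Fin n, W v * ((δ * N) * Fv v) :=
      Finset.sum_le_sum_of_subset_of_nonneg (Finset.subset_univ bad)
        (fun v _ _ => mul_nonneg (hW0 v) (mul_nonneg hδN.le (hF0 v)))
    have step3 : ∑ v : Fin N → Fin n, W v * ((δ * N) * Fv v)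
        = (δ * N) * ∑ v : Fin N → Fin n, W v * Fv v := by
      rw [Finset.mul_sum]
      exact Finset.sum_congr rfl fun v _ => by ring
    have step4 : (δ * N) * ∑ v : Fin N → Fin n, W v * Fv v ≤ (δ * N) * (1 / N) :=
      mul_le_mul_of_nonneg_left hEF hδN.le
    have step5 : (δ * N) * (1 / N) = δ := by field_simp
    linarith
  -- atoms
  have hatom : ∀ v : Fin N → Fin n,
      μ (⋂ l, s l ⁻¹' {v l}) = ENNReal.ofReal (W v) := by
    intro v
    have hmeas : ∀ l : Fin N,
        MeasurableSet[MeasurableSpace.comap (s l) inferInstance] (s l ⁻¹' {v l}) :=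
      fun l => ⟨{v l}, measurableSet_singleton _, rfl⟩
    rw [hindep.meas_iInter hmeas]
    have hpre : ∀ l : Fin N, μ (s l ⁻¹' {v l}) = ENNReal.ofReal (qv (v l)) := by
      intro l
      have : s l ⁻¹' {v l} = {ω | s l ω = v l} := by
        ext ω; simp [Set.mem_preimage]
      rw [this, hdist l (v l)]
    rw [Finset.prod_congr rfl fun l _ => hpre l]
    rw [hWdef]
    exact (ENNReal.ofReal_prod_of_nonneg fun l _ => hq0 (v l)).symm
  -- the good event
  set E : Set Ω := {ω | ∀ Shat : Finset (Fin n), Shat.card = k →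
        (∀ S : Finset (Fin n), S.card = k →
          ∑ i ∈ S, (((Finset.univ.filter (fun l => s l ω = i)).card : ℝ) / N)
            ≤ ∑ i ∈ Shat, (((Finset.univ.filter (fun l => s l ω = i)).card : ℝ) / N)) →
        ∀ T : Finset (Fin n), T.card = k →
          ∑ i ∈ T, π i - 2 * Real.sqrt ((1 - pT) ^ (t + 1) / pT)
              - 2 * Real.sqrt (k / (δ * N))
            ≤ ∑ i ∈ Shat, π i} with hEdef
  show ENNReal.ofReal (1 - δ) ≤ μ E
  have hEc : Eᶜ ⊆ ⋃ v ∈ bad, ⋂ l, s l ⁻¹' {v l} := by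
    intro ω hω
    refine Set.mem_iUnion₂.mpr ⟨fun l => s l ω, ?_, ?_⟩
    · rw [Finset.mem_filter]
      refine ⟨Finset.mem_univ _, lt_of_not_ge fun hle => hω ?_⟩
      exact hdet (fun l => s l ω) hle
    · exact Set.mem_iInter.mpr fun l => Set.mem_preimage.mpr rfl
  have hEcle : μ Eᶜ ≤ ENNReal.ofReal δ := by
    calc μ Eᶜ ≤ μ (⋃ v ∈ bad, ⋂ l, s l ⁻¹' {v l}) := measure_mono hEc
      _ ≤ ∑ v ∈ bad, μ (⋂ l, s l ⁻¹' {v l}) := measure_biUnion_finset_le _ _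
      _ = ∑ v ∈ bad, ENNReal.ofReal (W v) := Finset.sum_congr rfl fun v _ => hatom v
      _ = ENNReal.ofReal (∑ v ∈ bad, W v) :=
          (ENNReal.ofReal_sum_of_nonneg fun v _ => hW0 v).symm
      _ ≤ ENNReal.ofReal δ := ENNReal.ofReal_le_ofReal hbadsum
  have hfin : (1 : ENNReal) ≤ μ E + ENNReal.ofReal δ := by
    calc (1 : ENNReal) = μ Set.univ := (measure_univ).symm
      _ = μ (E ∪ Eᶜ) := by rw [Set.union_compl_self]
      _ ≤ μ E + μ Eᶜ := measure_union_le _ _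
      _ ≤ μ E + ENNReal.ofReal δ := add_le_add_right hEcle _
  have hsum1 : ENNReal.ofReal (1 - δ) + ENNReal.ofReal δ = 1 := by
    rw [← ENNReal.ofReal_add (by linarith) hδ0.le]
    norm_num
  have hfinal : ENNReal.ofReal (1 - δ) + ENNReal.ofReal δ ≤ μ E + ENNReal.ofReal δ := by
    rw [hsum1]; exact hfin
  exact (ENNReal.add_le_add_iff_right ENNReal.ofReal_ne_top).mp hfinal
end
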